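/- For each t < 0 and λ > 0, the set A = {(x,y) ∈ ℝ × (0, π/(2λ)) : sin(λy) = e^{λ²t}·cosh(λx)} (the shifted scaled Angenent oval), viewed as the graph of y(x,t) = (1/λ)·arcsin(e^{λ²t}·cosh(λx)) over the interval where e^{λ²t}·cosh(λx) < 1, satisfies the curve shortening flow equation y_t = y_xx/(1 + y_x²). -/

import Mathlib

open Real

lemma csf_inner_hasDerivAt {l c : ℝ} (hl : 0 < l) (hc : 0 < c) {z : ℝ}
    (h : c * Real.cosh (l * z) < 1) :
    HasDerivAt (fun z : ℝ => (1 / l) * Real.arcsin (c * Real.cosh (l * z)))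
      (c * Real.sinh (l * z) / Real.sqrt (1 - (c * Real.cosh (l * z)) ^ 2)) z := by
  have hu0 : 0 < c * Real.cosh (l * z) := mul_pos hc (Real.cosh_pos _)
  have h1 : c * Real.cosh (l * z) ≠ 1 := ne_of_lt h
  have h2 : c * Real.cosh (l * z) ≠ -1 := by nlinarith
  have hS : 0 < Real.sqrt (1 - (c * Real.cosh (l * z)) ^ 2) :=
    Real.sqrt_pos.mpr (by nlinarith)
  have hlin : HasDerivAt (fun z : ℝ => l * z) l z := by
    simpa using (hasDerivAt_id z).const_mul l
  have hg : HasDerivAt (fun z : ℝ => c * Real.cosh (l * z)) (c * (Real.sinh (l * z) * l)) z :=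
    ((Real.hasDerivAt_cosh (l * z)).comp z hlin).const_mul c
  have harcsin := ((Real.hasDerivAt_arcsin h2 h1).comp z hg).const_mul (1 / l)
  refine harcsin.congr_deriv ?_
  field_simp

theorem angenent_oval_satisfies_csf {l : ℝ} (hl : 0 < l) {x t : ℝ} (ht : t < 0)
    (hdom : Real.exp (l ^ 2 * t) * Real.cosh (l * x) < 1) :
    deriv (fun s : ℝ => (1 / l) * Real.arcsin (Real.exp (l ^ 2 * s) * Real.cosh (l * x))) t
      = deriv (deriv (fun z : ℝ => (1 / l) * Real.arcsin (Real.exp (l ^ 2 * t) * Real.cosh (l * z)))) x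
        / (1 + (deriv (fun z : ℝ => (1 / l) * Real.arcsin (Real.exp (l ^ 2 * t) * Real.cosh (l * z))) x) ^ 2) := by
  set c : ℝ := Real.exp (l ^ 2 * t) with hc_def
  have hc : 0 < c := Real.exp_pos _
  set u : ℝ := c * Real.cosh (l * x) with hu_def
  have hu0 : 0 < u := mul_pos hc (Real.cosh_pos _)
  have hu1 : u < 1 := hdom
  have hSq : 0 < 1 - u ^ 2 := by nlinarith
  set S : ℝ := Real.sqrt (1 - u ^ 2) with hS_def
  have hS : 0 < S := Real.sqrt_pos.mpr hSq
  have hS2 : S ^ 2 = 1 - u ^ 2 := Real.sq_sqrt hSq.le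
  -- time derivative
  have hts : HasDerivAt (fun s : ℝ => l ^ 2 * s) (l ^ 2) t := by
    simpa using (hasDerivAt_id t).const_mul (l ^ 2)
  have hte : HasDerivAt (fun s : ℝ => Real.exp (l ^ 2 * s) * Real.cosh (l * x))
      (Real.exp (l ^ 2 * t) * l ^ 2 * Real.cosh (l * x)) t := by
    exact ((Real.hasDerivAt_exp (l ^ 2 * t)).comp t hts).mul_const (Real.cosh (l * x))
  have h1 : u ≠ 1 := ne_of_lt hu1
  have h2 : u ≠ -1 := by nlinarith
  have hyt : HasDerivAt (fun s : ℝ => (1 / l) * Real.arcsin (Real.exp (l ^ 2 * s) * Real.cosh (l * x)))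
      (l * u / S) t := by
    have := ((Real.hasDerivAt_arcsin h2 h1).comp t hte).const_mul (1 / l)
    refine this.congr_deriv ?_
    have key : Real.exp (l ^ 2 * t) * l ^ 2 * Real.cosh (l * x) = l ^ 2 * u := by
      rw [hu_def, hc_def]; ring
    rw [key, ← hS_def]
    field_simp
  -- spatial derivative function g
  set sh : ℝ := Real.sinh (l * x) with hsh_def
  have ev : ∀ᶠ z in nhds x, c * Real.cosh (l * z) < 1 := by
    have hopen : IsOpen {z : ℝ | c * Real.cosh (l * z) < 1} :=
      isOpen_lt (by continuity) continuous_const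
    exact hopen.mem_nhds hdom
  have hderiv_eq : deriv (fun z : ℝ => (1 / l) * Real.arcsin (c * Real.cosh (l * z)))
      =ᶠ[nhds x] fun z : ℝ => c * Real.sinh (l * z) / Real.sqrt (1 - (c * Real.cosh (l * z)) ^ 2) :=
    ev.mono fun z hz => (csf_inner_hasDerivAt hl hc hz).deriv
  -- derivative of g at x
  have hlin : HasDerivAt (fun z : ℝ => l * z) l x := by
    simpa using (hasDerivAt_id x).const_mul l
  have hnum : HasDerivAt (fun z : ℝ => c * Real.sinh (l * z)) (c * (Real.cosh (l * x) * l)) x :=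
    ((Real.hasDerivAt_sinh (l * x)).comp x hlin).const_mul c
  have hcosh : HasDerivAt (fun z : ℝ => c * Real.cosh (l * z)) (c * (Real.sinh (l * x) * l)) x :=
    ((Real.hasDerivAt_cosh (l * x)).comp x hlin).const_mul c
  have hq : HasDerivAt (fun z : ℝ => 1 - (c * Real.cosh (l * z)) ^ 2)
      (-(2 * u ^ 1 * (c * (sh * l)))) x := by
    simpa using (hasDerivAt_const x (1:ℝ)).fun_sub (hcosh.fun_pow 2)
  have hden : HasDerivAt (fun z : ℝ => Real.sqrt (1 - (c * Real.cosh (l * z)) ^ 2))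
      (1 / (2 * S) * -(2 * u ^ 1 * (c * (sh * l)))) x := by
    have := (Real.hasDerivAt_sqrt (x := 1 - u ^ 2) (by positivity)).comp x hq
    simpa [hS_def, Function.comp_def] using this
  have hg' : HasDerivAt
      (fun z : ℝ => c * Real.sinh (l * z) / Real.sqrt (1 - (c * Real.cosh (l * z)) ^ 2))
      ((c * (Real.cosh (l * x) * l) * S - c * sh * (1 / (2 * S) * -(2 * u ^ 1 * (c * (sh * l))))) / S ^ 2)
      x := by
    have := hnum.fun_div hden (by simpa [hS_def] using hS.ne')
    simpa [hS_def] using this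
  have hyxx : deriv (deriv (fun z : ℝ => (1 / l) * Real.arcsin (c * Real.cosh (l * z)))) x
      = (c * (Real.cosh (l * x) * l) * S - c * sh * (1 / (2 * S) * -(2 * u ^ 1 * (c * (sh * l))))) / S ^ 2 := by
    rw [Filter.EventuallyEq.deriv_eq hderiv_eq]
    exact hg'.deriv
  have hyx : deriv (fun z : ℝ => (1 / l) * Real.arcsin (c * Real.cosh (l * z))) x = c * sh / S := by
    have := (csf_inner_hasDerivAt hl hc (show c * Real.cosh (l * x) < 1 from hdom)).deriv
    rw [this, hsh_def, hS_def, hu_def]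
  rw [hyt.deriv, hyxx, hyx]
  have hden2 : 0 < S ^ 2 + (c * sh) ^ 2 := by positivity
  have hucl : Real.cosh (l * x) = u / c := by rw [hu_def]; field_simp
  rw [hucl]
  field_simp
  ring
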